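/- Let A and B be operators on H such that A and B* are essentially isometric, ‖Aⁿx‖ → 0 and ‖B*ⁿx‖ → 0 as n → ∞ for every x ∈ H, and let T ∈ B(H) be such that ATB − T is compact. Then the sequence {(1/n) Σ_{i=0}^{n−1} AⁱTBⁱ} converges in operator norm if and only if T admits a decomposition T = T₀ + K where T₀ ∈ B(H) satisfies AT₀B = T₀ and K is a compact operator on H. -/

import Mathlib

set_option synthInstance.maxHeartbeats 1000000
set_option maxHeartbeats 1000000


open ContinuousLinearMap Filter Topology

section Aux

variable {H : Type*} [NormedAddCommGroup H] [InnerProductSpace ℂ H] [CompleteSpace H]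

/-- Uniform bound on powers from pointwise convergence (Banach–Steinhaus). -/
lemma aux_pow_bound {A : H →L[ℂ] H}
    (hAn : ∀ x : H, Tendsto (fun n : ℕ => ‖(A ^ n) x‖) atTop (𝓝 0)) :
    ∃ C : ℝ, 1 ≤ C ∧ ∀ n : ℕ, ‖A ^ n‖ ≤ C := by
  obtain ⟨C, hC⟩ := banach_steinhaus (g := fun n : ℕ => A ^ n) (fun x => by
    obtain ⟨c, hc⟩ := (hAn x).bddAbove_range
    exact ⟨c, fun n => hc ⟨n, rfl⟩⟩)
  exact ⟨max C 1, le_max_right _ _, fun n => (hC n).trans (le_max_left _ _)⟩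

/-- Sum of compact operators is compact. -/
lemma aux_sum_compact {ι : Type*} (s : Finset ι) (f : ι → H →L[ℂ] H)
    (h : ∀ i ∈ s, IsCompactOperator ⇑(f i)) :
    IsCompactOperator ⇑(∑ i ∈ s, f i) := by
  classical
  induction s using Finset.induction_on with
  | empty => simpa using isCompactOperator_zero
  | insert a s hx ih =>
    rw [Finset.sum_insert hx]
    have h1 := h a (Finset.mem_insert_self _ _)
    have h2 := ih fun i hi => h i (Finset.mem_insert_of_mem hi)
    exact h1.add h2

/-- If `Aⁿ → 0` strongly with uniformly bounded powers and `K` is compact,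
then `‖Aⁿ K‖ → 0`. -/
lemma aux_tendsto_comp {A K : H →L[ℂ] H} (hK : IsCompactOperator ⇑K)
    {C : ℝ} (hC1 : 1 ≤ C) (hCA : ∀ n : ℕ, ‖A ^ n‖ ≤ C)
    (hAn : ∀ x : H, Tendsto (fun n : ℕ => ‖(A ^ n) x‖) atTop (𝓝 0)) :
    Tendsto (fun n : ℕ => ‖A ^ n * K‖) atTop (𝓝 0) := by
  have hC0 : (0 : ℝ) < C := lt_of_lt_of_le one_pos hC1
  rw [Metric.tendsto_atTop]
  intro ε hε
  have hK' : IsCompactOperator ⇑(K.toLinearMap) := hK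
  have hS : IsCompact (closure (⇑K.toLinearMap '' Metric.closedBall 0 1)) :=
    hK'.isCompact_closure_image_closedBall 1
  set δ : ℝ := ε / (4 * C) with hδ
  have hδ0 : 0 < δ := by positivity
  obtain ⟨t, htfin, hcover⟩ := Metric.totallyBounded_iff.1 hS.totallyBounded δ hδ0
  have hall : ∀ᶠ n : ℕ in atTop, ∀ y ∈ t, ‖(A ^ n) y‖ < ε / 4 :=
    (eventually_all_finite htfin).2 fun y _ => (hAn y).eventually_lt_const (by positivity)
  obtain ⟨N, hN⟩ := eventually_atTop.1 hall
  refine ⟨N, fun n hn => ?_⟩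
  rw [Real.dist_eq, sub_zero, abs_of_nonneg (norm_nonneg _)]
  have key : ‖A ^ n * K‖ ≤ ε / 2 := by
    refine opNorm_le_bound' _ (by positivity) fun x hx => ?_
    have hc : (0 : ℝ) < ‖x‖ := lt_of_le_of_ne (norm_nonneg _) (Ne.symm hx)
    set x' : H := (‖x‖ : ℝ)⁻¹ • x with hx'def
    have hx1 : ‖x'‖ ≤ 1 := by
      rw [hx'def, norm_smul, Real.norm_eq_abs, abs_of_nonneg (inv_nonneg.2 hc.le),
        inv_mul_cancel₀ hc.ne']
    have hmem : K.toLinearMap x' ∈ closure (⇑K.toLinearMap '' Metric.closedBall 0 1) :=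
      subset_closure ⟨x', by simpa [Metric.mem_closedBall, dist_zero_right] using hx1, rfl⟩
    obtain ⟨y, hyt, hy⟩ := Set.mem_iUnion₂.1 (hcover hmem)
    rw [Metric.mem_ball, dist_eq_norm] at hy
    have hxx : x = (‖x‖ : ℝ) • x' := (smul_inv_smul₀ hc.ne' x).symm
    have hsplit : (A ^ n * K) x' = (A ^ n) (K x' - y) + (A ^ n) y := by
      rw [map_sub]; simp [ContinuousLinearMap.mul_apply]
    have hb1 : ‖(A ^ n) (K x' - y)‖ ≤ C * δ := by
      calc ‖(A ^ n) (K x' - y)‖ ≤ ‖A ^ n‖ * ‖K x' - y‖ := (A ^ n).le_opNorm _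
        _ ≤ C * δ := mul_le_mul (hCA n) (by exact_mod_cast hy.le) (norm_nonneg _) hC0.le
    have hb2 : ‖(A ^ n) y‖ ≤ ε / 4 := (hN n hn y hyt).le
    calc ‖(A ^ n * K) x‖ = ‖x‖ * ‖(A ^ n * K) x'‖ := by
          conv_lhs => rw [hxx]
          rw [map_smul_of_tower, norm_smul, Real.norm_eq_abs, abs_of_pos hc]
      _ ≤ ‖x‖ * (C * δ + ε / 4) := by
          refine mul_le_mul_of_nonneg_left ?_ hc.le
          rw [hsplit]
          exact (norm_add_le _ _).trans (add_le_add hb1 hb2)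
      _ = (ε / 2) * ‖x‖ := by rw [hδ]; field_simp; ring
  linarith

/-- The operators `AⁱTBⁱ - T` are compact whenever `ATB - T` is. -/
lemma aux_compact_D (A B T : H →L[ℂ] H) (hT : IsCompactOperator (⇑(A * T * B - T))) :
    ∀ i : ℕ, IsCompactOperator ⇑(A ^ i * T * B ^ i - T) := by
  intro i
  induction i with
  | zero => simpa using isCompactOperator_zero
  | succ i ih =>
    have heq : A ^ (i + 1) * T * B ^ (i + 1) - T
        = A * ((A ^ i * T * B ^ i - T) * B) + (A * T * B - T) := by
      rw [pow_succ' A, pow_succ B]; noncomm_ring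
    rw [heq]
    have h1 : IsCompactOperator ⇑(A * ((A ^ i * T * B ^ i - T) * B)) :=
      (ih.comp_clm B).clm_comp A
    exact h1.add hT

end Aux

/-- **Theorem 4.4.** Let `A` and `B*` be essentially isometric operators on `H` with
`‖Aⁿx‖ → 0` and `‖B*ⁿx‖ → 0` for all `x ∈ H`, and let `T ∈ B(H)` with `ATB − T`
compact. Then `{(1/n) Σ_{i<n} AⁱTBⁱ}` converges in operator norm iff `T = T₀ + K`
where `AT₀B = T₀` and `K` is compact. -/
theorem stmt_14 {H : Type*} [NormedAddCommGroup H] [InnerProductSpace ℂ H]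
    [CompleteSpace H] [TopologicalSpace.SeparableSpace H]
    (hinf : ¬ FiniteDimensional ℂ H)
    (A B T : H →L[ℂ] H)
    (hA : IsCompactOperator (⇑((1 : H →L[ℂ] H) - adjoint A * A)))
    (hB : IsCompactOperator (⇑((1 : H →L[ℂ] H) - B * adjoint B)))
    (hAn : ∀ x : H, Tendsto (fun n : ℕ => ‖(A ^ n) x‖) atTop (𝓝 0))
    (hBn : ∀ x : H, Tendsto (fun n : ℕ => ‖((adjoint B) ^ n) x‖) atTop (𝓝 0))
    (hT : IsCompactOperator (⇑(A * T * B - T))) :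
    (∃ L : H →L[ℂ] H,
        Tendsto (fun n : ℕ => (n : ℝ)⁻¹ • ∑ i ∈ Finset.range n, A ^ i * T * B ^ i)
          atTop (𝓝 L)) ↔
      (∃ T₀ K : H →L[ℂ] H, T = T₀ + K ∧ A * T₀ * B = T₀ ∧ IsCompactOperator ⇑K) := by
  obtain ⟨CA, hCA1, hCA⟩ := aux_pow_bound hAn
  obtain ⟨CB, hCB1, hCB'⟩ := aux_pow_bound hBn
  have hadj : ∀ n : ℕ, ‖B ^ n‖ = ‖(adjoint B) ^ n‖ := by
    intro n
    rw [← ContinuousLinearMap.star_eq_adjoint, ← star_pow, norm_star]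
  have hCB : ∀ n : ℕ, ‖B ^ n‖ ≤ CB := fun n => (hadj n) ▸ hCB' n
  constructor
  · rintro ⟨L, hL⟩
    set M : ℕ → (H →L[ℂ] H) :=
      fun n => (n : ℝ)⁻¹ • ∑ i ∈ Finset.range n, A ^ i * T * B ^ i with hMdef
    have hMn : ∀ m : ℕ, M m = (m : ℝ)⁻¹ • ∑ i ∈ Finset.range m, A ^ i * T * B ^ i :=
      fun m => rfl
    have hMrec : ∀ n : ℕ, A * M n * B - M n = (n : ℝ)⁻¹ • (A ^ n * T * B ^ n - T) := by
      intro n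
      have h1 : A * M n * B
          = (n : ℝ)⁻¹ • ∑ i ∈ Finset.range n, A ^ (i + 1) * T * B ^ (i + 1) := by
        rw [hMn n]
        simp only [mul_smul_comm, smul_mul_assoc, Finset.mul_sum, Finset.sum_mul]
        congr 1
        refine Finset.sum_congr rfl fun i _ => ?_
        rw [pow_succ' A, pow_succ B]; noncomm_ring
      have h2 : ∑ i ∈ Finset.range n, A ^ (i + 1) * T * B ^ (i + 1)
          = (∑ i ∈ Finset.range n, A ^ i * T * B ^ i) + A ^ n * T * B ^ n - T := by
        have e1 := Finset.sum_range_succ' (fun i => A ^ i * T * B ^ i) n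
        have e2 := Finset.sum_range_succ (fun i => A ^ i * T * B ^ i) n
        simp only [pow_zero, one_mul, mul_one] at e1 e2
        calc ∑ i ∈ Finset.range n, A ^ (i + 1) * T * B ^ (i + 1)
            = (∑ i ∈ Finset.range (n + 1), A ^ i * T * B ^ i) - T := by
              rw [e1, add_sub_cancel_right]
          _ = _ := by rw [e2]
      rw [h1, h2, hMn n, ← smul_sub]
      congr 1
      abel
    have hzero : Tendsto (fun n : ℕ => A * M n * B - M n) atTop (𝓝 0) := by
      apply squeeze_zero_norm (a := fun n : ℕ => (n : ℝ)⁻¹ * (CA * ‖T‖ * CB + ‖T‖))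
      · intro n
        rw [hMrec n, norm_smul, Real.norm_eq_abs, abs_of_nonneg (by positivity)]
        refine mul_le_mul_of_nonneg_left ?_ (by positivity)
        refine (norm_sub_le _ _).trans (add_le_add ?_ le_rfl)
        calc ‖A ^ n * T * B ^ n‖ ≤ ‖A ^ n * T‖ * ‖B ^ n‖ := norm_mul_le _ _
          _ ≤ (‖A ^ n‖ * ‖T‖) * ‖B ^ n‖ :=
              mul_le_mul_of_nonneg_right (norm_mul_le _ _) (norm_nonneg _)
          _ ≤ CA * ‖T‖ * CB := by
              refine mul_le_mul (mul_le_mul_of_nonneg_right (hCA n) (norm_nonneg _))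
                (hCB n) (norm_nonneg _) ?_
              have : (0:ℝ) ≤ CA := le_trans zero_le_one hCA1
              positivity
      · simpa using (tendsto_inv_atTop_nhds_zero_nat (𝕜 := ℝ)).mul_const (CA * ‖T‖ * CB + ‖T‖)
    have h1 : Tendsto (fun n : ℕ => A * M n * B - M n) atTop (𝓝 (A * L * B - L)) :=
      ((hL.const_mul A).mul_const B).sub hL
    have hfix : A * L * B = L := by
      have := tendsto_nhds_unique h1 hzero
      rwa [sub_eq_zero] at this
    have hDcomp := aux_compact_D A B T hT
    have hKn : ∀ n : ℕ, 1 ≤ n → IsCompactOperator ⇑(M n - T) := by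
      intro n hn
      have hne : ((n : ℝ)) ≠ 0 := Nat.cast_ne_zero.2 (by omega)
      have heq : M n - T = (n : ℝ)⁻¹ • ∑ i ∈ Finset.range n, (A ^ i * T * B ^ i - T) := by
        rw [Finset.sum_sub_distrib, Finset.sum_const, Finset.card_range, smul_sub, hMn n]
        congr 1
        rw [← Nat.cast_smul_eq_nsmul ℝ, smul_smul, inv_mul_cancel₀ hne, one_smul]
      rw [heq]
      have hsum := aux_sum_compact (Finset.range n) _ (fun i _ => hDcomp i)
      simpa [ContinuousLinearMap.coe_smul] using hsum.smul ((n : ℝ)⁻¹)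
    have hTL : IsCompactOperator ⇑(T - L) := by
      have htd : Tendsto (fun n : ℕ => T - M n) atTop (𝓝 (T - L)) :=
        tendsto_const_nhds.sub hL
      refine isCompactOperator_of_tendsto htd ?_
      filter_upwards [Ici_mem_atTop 1] with n hn
      have h : T - M n = -(M n - T) := by abel
      rw [h]
      simpa [ContinuousLinearMap.coe_neg] using (hKn n hn).neg
    exact ⟨L, T - L, by abel, hfix, hTL⟩
  · rintro ⟨T₀, K, rfl, hfix, hK⟩
    have hinv : ∀ i : ℕ, A ^ i * T₀ * B ^ i = T₀ := by
      intro i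
      induction i with
      | zero => simp
      | succ i ih =>
        calc A ^ (i + 1) * T₀ * B ^ (i + 1) = A * (A ^ i * T₀ * B ^ i) * B := by
              rw [pow_succ' A, pow_succ B]; noncomm_ring
          _ = A * T₀ * B := by rw [ih]
          _ = T₀ := hfix
    have hKn : Tendsto (fun n : ℕ => ‖A ^ n * K‖) atTop (𝓝 0) :=
      aux_tendsto_comp hK hCA1 hCA hAn
    have hterm : Tendsto (fun i : ℕ => A ^ i * (T₀ + K) * B ^ i) atTop (𝓝 T₀) := by
      rw [tendsto_iff_norm_sub_tendsto_zero]
      have heq : ∀ i : ℕ, A ^ i * (T₀ + K) * B ^ i - T₀ = (A ^ i * K) * B ^ i := by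
        intro i
        rw [mul_add, add_mul, hinv i, add_sub_cancel_left, mul_assoc]
      refine squeeze_zero (fun i => norm_nonneg _) (fun i => ?_)
        (by simpa using hKn.mul_const CB)
      rw [heq i]
      exact (norm_mul_le _ _).trans (mul_le_mul_of_nonneg_left (hCB i) (norm_nonneg _))
    exact ⟨T₀, by simpa using hterm.cesaro_smul⟩
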